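/- Fix λ ∈ ℝ, K ≥ 0, and a continuous function f : ℝ → ℝ with f ≥ 0 and f(y) = 0 whenever |y| > K. For every ε > 0 there exists T > 0 such that for all t ≥ T and all x ∈ [λt − t^{2/3}, λt + t^{2/3}], one has | √(2πt) · e^{(λt−x)²/(2t)} · ∫_ℝ (1 − e^{−f(y)}) dν_x(y) − ∫_ℝ (1 − e^{−f(y)}) dy | ≤ ε, where ν_x is the Gaussian probability measure on ℝ with mean x − λt and variance t. In other words, uniformly over x in this window, E[1 − e^{−f(x + B_t − λt)}] = (1 + o_t(1)) · (∫ (1 − e^{−f(y)}) dy) · (1/√(2πt)) · e^{−(λt−x)²/(2t)}. -/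

import Mathlib

open MeasureTheory ProbabilityTheory Real Filter
open scoped NNReal ENNReal

lemma integral_gaussianReal_mul (m : ℝ) (v : ℝ≥0) (hv : v ≠ 0) (g : ℝ → ℝ) :
    ∫ y, g y ∂(gaussianReal m v) = ∫ y, gaussianPDFReal m v y * g y := by
  rw [gaussianReal_of_var_ne_zero m hv]
  have hpdf : (gaussianPDF m v)
      = fun y => ((Real.toNNReal (gaussianPDFReal m v y) : ℝ≥0) : ℝ≥0∞) := by
    ext y
    simp [gaussianPDF, ENNReal.ofReal]
  rw [hpdf, integral_withDensity_eq_integral_smul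
    ((measurable_gaussianPDFReal m v).real_toNNReal) g]
  congr 1
  ext y
  simp [NNReal.smul_def, Real.coe_toNNReal _ (gaussianPDFReal_nonneg m v y)]

lemma abs_exp_sub_one_le_exp_abs_sub_one (u : ℝ) : |Real.exp u - 1| ≤ Real.exp |u| - 1 := by
  rcases le_or_gt 0 u with hu | hu
  · rw [abs_of_nonneg hu, abs_of_nonneg (by linarith [Real.one_le_exp hu])]
  · rw [abs_of_neg hu, abs_of_nonpos (by linarith [Real.exp_le_one_iff.mpr hu.le])]
    have h1 : u + 1 ≤ Real.exp u := Real.add_one_le_exp u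
    have h2 : -u + 1 ≤ Real.exp (-u) := Real.add_one_le_exp (-u)
    linarith

/-- Uniformly over `x ∈ [λt - t^{2/3}, λt + t^{2/3}]`,
`E[1 - e^{-f(x + B_t - λt)}] = (1 + o_t(1)) (∫ (1 - e^{-f(y)}) dy) (1/√(2πt)) e^{-(λt-x)²/(2t)}`
for a nonnegative continuous `f` supported in `[-K, K]`. -/
theorem laplace_functional_asymptotics_right_window (lam K : ℝ) (hK : 0 ≤ K)
    (f : ℝ → ℝ) (hf : Continuous f) (hf_nonneg : ∀ y, 0 ≤ f y)
    (hf_supp : ∀ y, K < |y| → f y = 0) :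
    ∀ ε > 0, ∃ T > 0, ∀ t ≥ T,
      ∀ x ∈ Set.Icc (lam * t - t ^ ((2 : ℝ) / 3)) (lam * t + t ^ ((2 : ℝ) / 3)),
        |Real.sqrt (2 * Real.pi * t) * Real.exp ((lam * t - x) ^ 2 / (2 * t))
            * (∫ y, (1 - Real.exp (-f y)) ∂(gaussianReal (x - lam * t) t.toNNReal))
          - ∫ y, (1 - Real.exp (-f y))| ≤ ε := by
  intro ε hε
  set c : ℝ := 2 * K + K ^ 2 with hc
  have hc0 : 0 ≤ c := by positivity
  -- the error bound tends to 0
  have h0 : Tendsto (fun t : ℝ => t ^ (-(1 : ℝ)/3)) atTop (nhds 0) := by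
    have := tendsto_rpow_neg_atTop (y := (1 : ℝ)/3) (by norm_num)
    simpa [neg_div] using this
  have hD : Tendsto (fun t : ℝ => 2 * K * (Real.exp (c * t ^ (-(1 : ℝ)/3)) - 1))
      atTop (nhds 0) := by
    have hcont : Continuous (fun u : ℝ => 2 * K * (Real.exp (c * u) - 1)) := by continuity
    have := hcont.continuousAt.tendsto.comp h0
    simpa [Function.comp_def] using this
  have hev : ∀ᶠ t in atTop, 2 * K * (Real.exp (c * t ^ (-(1 : ℝ)/3)) - 1) ≤ ε :=
    hD.eventually (eventually_le_nhds hε)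
  obtain ⟨a, ha⟩ := eventually_atTop.mp hev
  refine ⟨max a 1, lt_of_lt_of_le one_pos (le_max_right _ _), fun t ht x hx => ?_⟩
  have ht1 : (1 : ℝ) ≤ t := le_trans (le_max_right a 1) ht
  have ht0 : (0 : ℝ) < t := lt_of_lt_of_le one_pos ht1
  have hta : a ≤ t := le_trans (le_max_left a 1) ht
  have hvt : ((t.toNNReal : ℝ≥0) : ℝ) = t := Real.coe_toNNReal t ht0.le
  have hvne : t.toNNReal ≠ 0 := by
    simp only [ne_eq, Real.toNNReal_eq_zero, not_le]
    exact ht0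
  set g : ℝ → ℝ := fun y => 1 - Real.exp (-f y) with hg
  have hg_cont : Continuous g := by continuity
  have hg_nonneg : ∀ y, 0 ≤ g y := fun y => by
    have : Real.exp (-f y) ≤ 1 := Real.exp_le_one_iff.mpr (by linarith [hf_nonneg y])
    simp only [hg]; linarith
  have hg_le_one : ∀ y, g y ≤ 1 := fun y => by
    have : 0 < Real.exp (-f y) := Real.exp_pos _
    simp only [hg]; linarith
  have hg_supp : ∀ y, y ∉ Set.Icc (-K) K → g y = 0 := by
    intro y hy
    have : K < |y| := by
      simp only [Set.mem_Icc, not_and_or, not_le] at hy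
      rcases hy with h | h
      · rw [abs_of_neg (by linarith)]; linarith
      · rw [abs_of_pos (by linarith)]; exact h
    simp [hg, hf_supp y this]
  have hg_compact : HasCompactSupport g :=
    HasCompactSupport.intro isCompact_Icc hg_supp
  set m : ℝ := x - lam * t with hm
  have hm_abs : |m| ≤ t ^ ((2 : ℝ) / 3) := by
    rw [abs_le]
    obtain ⟨h1, h2⟩ := hx
    constructor <;> [skip; skip] <;> simp only [hm] <;> linarith
  set E : ℝ → ℝ := fun y => Real.exp ((m ^ 2 - (y - m) ^ 2) / (2 * t)) with hE
  have hsq : (lam * t - x) ^ 2 = m ^ 2 := by rw [hm]; ring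
  have hsqrt_pos : 0 < Real.sqrt (2 * Real.pi * t) :=
    Real.sqrt_pos.mpr (by positivity)
  -- rewrite the gaussian integral
  have hkey : Real.sqrt (2 * Real.pi * t) * Real.exp ((lam * t - x) ^ 2 / (2 * t))
      * (∫ y, g y ∂(gaussianReal (x - lam * t) t.toNNReal))
      = ∫ y, E y * g y := by
    rw [integral_gaussianReal_mul _ _ hvne, ← integral_const_mul]
    congr 1
    ext y
    rw [gaussianPDFReal]
    rw [hsq]
    rw [hvt]
    rw [hE, ← hm]
    show Real.sqrt (2 * Real.pi * t) * Real.exp (m ^ 2 / (2 * t))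
        * ((Real.sqrt (2 * Real.pi * t))⁻¹ * Real.exp (-(y - m) ^ 2 / (2 * t)) * g y)
        = Real.exp ((m ^ 2 - (y - m) ^ 2) / (2 * t)) * g y
    have hcancel : Real.sqrt (2 * Real.pi * t) * (Real.sqrt (2 * Real.pi * t))⁻¹ = 1 :=
      mul_inv_cancel₀ hsqrt_pos.ne'
    have hexp : Real.exp (m ^ 2 / (2 * t)) * Real.exp (-(y - m) ^ 2 / (2 * t))
        = Real.exp ((m ^ 2 - (y - m) ^ 2) / (2 * t)) := by
      rw [← Real.exp_add]; congr 1; ring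
    calc Real.sqrt (2 * Real.pi * t) * Real.exp (m ^ 2 / (2 * t))
        * ((Real.sqrt (2 * Real.pi * t))⁻¹ * Real.exp (-(y - m) ^ 2 / (2 * t)) * g y)
        = (Real.sqrt (2 * Real.pi * t) * (Real.sqrt (2 * Real.pi * t))⁻¹)
          * (Real.exp (m ^ 2 / (2 * t)) * Real.exp (-(y - m) ^ 2 / (2 * t)) * g y) := by ring
      _ = Real.exp ((m ^ 2 - (y - m) ^ 2) / (2 * t)) * g y := by rw [hcancel, hexp, one_mul]
  rw [hkey]
  -- integrability
  have hA_cont : Continuous fun y => E y * g y := by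
    apply Continuous.mul _ hg_cont
    apply Real.continuous_exp.comp
    fun_prop
  have hA_supp : ∀ y, y ∉ Set.Icc (-K) K → E y * g y = 0 := fun y hy => by
    rw [hg_supp y hy, mul_zero]
  have hA_compact : HasCompactSupport fun y => E y * g y :=
    HasCompactSupport.intro isCompact_Icc hA_supp
  have hA_int : Integrable fun y => E y * g y := hA_cont.integrable_of_hasCompactSupport hA_compact
  have hg_int : Integrable g := hg_cont.integrable_of_hasCompactSupport hg_compact
  rw [← integral_sub hA_int hg_int]
  -- restrict to [-K, K]
  have hsub : ∀ y, y ∉ Set.Icc (-K) K → E y * g y - g y = 0 := fun y hy => by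
    rw [hg_supp y hy]; ring
  rw [← setIntegral_eq_integral_of_forall_compl_eq_zero hsub]
  set δ : ℝ := c * t ^ (-(1 : ℝ)/3) with hδ
  have hδ0 : 0 ≤ δ := mul_nonneg hc0 (Real.rpow_nonneg ht0.le _)
  -- pointwise bound on [-K, K]
  have hbound : ∀ y ∈ Set.Icc (-K) K, ‖E y * g y - g y‖ ≤ Real.exp δ - 1 := by
    intro y hy
    have hyK : |y| ≤ K := abs_le.mpr ⟨hy.1, hy.2⟩
    set u : ℝ := (m ^ 2 - (y - m) ^ 2) / (2 * t) with hu
    have hu_abs : |u| ≤ δ := by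
      have h1 : |m ^ 2 - (y - m) ^ 2| ≤ 2 * t ^ ((2 : ℝ)/3) * K + K ^ 2 := by
        have : m ^ 2 - (y - m) ^ 2 = 2 * m * y - y ^ 2 := by ring
        rw [this]
        calc |2 * m * y - y ^ 2| ≤ |2 * m * y| + |y ^ 2| := abs_sub _ _
          _ = 2 * |m| * |y| + y ^ 2 := by
              have hy2 : |y ^ 2| = y ^ 2 := abs_of_nonneg (sq_nonneg y)
              rw [abs_mul, abs_mul, abs_two, hy2]
          _ ≤ 2 * t ^ ((2 : ℝ)/3) * K + K ^ 2 := by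
              have h3 : |y| ^ 2 ≤ K ^ 2 := by
                apply sq_le_sq' <;> [linarith [abs_nonneg y]; exact hyK]
              rw [← sq_abs y]
              have := mul_le_mul (by linarith : 2 * |m| ≤ 2 * t ^ ((2:ℝ)/3)) hyK
                (abs_nonneg y) (by positivity)
              linarith
      have h2 : |u| = |m ^ 2 - (y - m) ^ 2| / (2 * t) := by
        rw [hu, abs_div, abs_of_pos (by positivity : (0:ℝ) < 2 * t)]
      rw [h2]
      have h4 : (2 * t ^ ((2 : ℝ)/3) * K + K ^ 2) / (2 * t) ≤ δ := by
        have ht23 : t ^ ((2 : ℝ)/3) / t = t ^ (-(1 : ℝ)/3) := by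
          rw [show -(1 : ℝ)/3 = (2 : ℝ)/3 - 1 by norm_num, Real.rpow_sub ht0, Real.rpow_one]
        have htinv : t⁻¹ ≤ t ^ (-(1 : ℝ)/3) := by
          rw [← Real.rpow_neg_one]
          apply Real.rpow_le_rpow_of_exponent_le ht1
          norm_num
        have expand : (2 * t ^ ((2 : ℝ)/3) * K + K ^ 2) / (2 * t)
            = K * (t ^ ((2 : ℝ)/3) / t) + K ^ 2 / 2 * t⁻¹ := by
          field_simp [ht0.ne']
        rw [expand, ht23, hδ, hc]
        have ht3 : 0 ≤ t ^ (-(1 : ℝ)/3) := Real.rpow_nonneg ht0.le _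
        have hK2 : K ^ 2 / 2 * t⁻¹ ≤ K ^ 2 * t ^ (-(1 : ℝ)/3) := by
          have h5 := mul_le_mul_of_nonneg_left htinv (by positivity : (0:ℝ) ≤ K ^ 2 / 2)
          have h6 : (0:ℝ) ≤ K ^ 2 / 2 * (t ^ (-(1 : ℝ)/3)) :=
            mul_nonneg (by positivity) ht3
          linarith
        have hKp : (0:ℝ) ≤ K * t ^ (-(1 : ℝ)/3) := mul_nonneg hK ht3
        linarith
      calc |m ^ 2 - (y - m) ^ 2| / (2 * t)
          ≤ (2 * t ^ ((2 : ℝ)/3) * K + K ^ 2) / (2 * t) :=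
            div_le_div_of_nonneg_right h1 (by positivity) |>.trans_eq rfl
        _ ≤ δ := h4
    have step1 : ‖E y * g y - g y‖ = |Real.exp u - 1| * g y := by
      rw [Real.norm_eq_abs]
      have : E y * g y - g y = (Real.exp u - 1) * g y := by simp only [hE]; rw [← hu]; ring
      rw [this, abs_mul, abs_of_nonneg (hg_nonneg y)]
    rw [step1]
    calc |Real.exp u - 1| * g y ≤ |Real.exp u - 1| * 1 :=
          mul_le_mul_of_nonneg_left (hg_le_one y) (abs_nonneg _)
      _ = |Real.exp u - 1| := mul_one _
      _ ≤ Real.exp |u| - 1 := abs_exp_sub_one_le_exp_abs_sub_one u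
      _ ≤ Real.exp δ - 1 := by
          have := Real.exp_le_exp.mpr hu_abs
          linarith
  have hmeas : volume (Set.Icc (-K) K) < ⊤ := by
    rw [Real.volume_Icc]
    exact ENNReal.ofReal_lt_top
  have hfinal := norm_setIntegral_le_of_norm_le_const hmeas hbound
  rw [measureReal_def] at hfinal
  rw [Real.norm_eq_abs] at hfinal
  have hvol : (volume (Set.Icc (-K) K)).toReal = 2 * K := by
    rw [Real.volume_Icc, ENNReal.toReal_ofReal (by linarith)]
    ring
  rw [hvol] at hfinal
  calc |∫ y in Set.Icc (-K) K, (E y * g y - g y)| ≤ (Real.exp δ - 1) * (2 * K) := hfinal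
    _ = 2 * K * (Real.exp (c * t ^ (-(1 : ℝ)/3)) - 1) := by rw [hδ]; ring
    _ ≤ ε := ha t hta
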